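/- Let I ⊆ ℝ be an open interval, let V ⊆ ℝ² be open and convex, and let G, H₁, H₂ : I × V → ℝ be smooth functions with G(w,x) > 0 for all (w,x) ∈ I × V. Then the following three conditions hold identically on I × V: (RW1) G·∂_w H_A − H_A·∂_w G = 0 for A = 1,2; (RW2) H₁·∂₂G − H₂·∂₁G + G·(∂₁H₂ − ∂₂H₁) = 0; (RW3) H₁·∂_w H₂ − H₂·∂_w H₁ = 0; if and only if there exists a smooth function ζ : V → ℝ such that H_A(w,x) = G(w,x)·(∂_A ζ)(x) for all (w,x) ∈ I × V and A = 1,2. Here ∂_w denotes the partial derivative along the first coordinate and ∂₁, ∂₂ the partial derivatives along the two coordinates of V. -/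

import Mathlib

open ContinuousLinearMap in
/-- slice in the x-variables -/
theorem slice_hasFDerivAt {φ : ℝ × (ℝ × ℝ) → ℝ} {w₀ : ℝ} {x : ℝ × ℝ}
    (h : DifferentiableAt ℝ φ (w₀, x)) :
    HasFDerivAt (fun y => φ (w₀, y))
      ((fderiv ℝ φ (w₀, x)).comp
        ((0 : (ℝ × ℝ) →L[ℝ] ℝ).prod (ContinuousLinearMap.id ℝ (ℝ × ℝ)))) x :=
  h.hasFDerivAt.comp x ((hasFDerivAt_const w₀ x).prodMk (hasFDerivAt_id x))

theorem slice_fderiv {φ : ℝ × (ℝ × ℝ) → ℝ} {w₀ : ℝ} {x : ℝ × ℝ}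
    (h : DifferentiableAt ℝ φ (w₀, x)) (e : ℝ × ℝ) :
    fderiv ℝ (fun y => φ (w₀, y)) x e = fderiv ℝ φ (w₀, x) (0, e) := by
  rw [(slice_hasFDerivAt h).fderiv]
  simp

/-- line in the w-variable -/
theorem line_hasDerivAt {φ : ℝ × (ℝ × ℝ) → ℝ} {w : ℝ} {x : ℝ × ℝ}
    (h : DifferentiableAt ℝ φ (w, x)) :
    HasDerivAt (fun s => φ (s, x)) (fderiv ℝ φ (w, x) (1, 0)) w := by
  have h1 : HasDerivAt (fun s : ℝ => (s, x)) ((1 : ℝ), (0 : ℝ × ℝ)) w :=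
    (hasDerivAt_id w).prodMk (hasDerivAt_const w x)
  exact h.hasFDerivAt.comp_hasDerivAt w h1

open ContinuousLinearMap in
theorem fderiv_eval_comm {ζ : ℝ × ℝ → ℝ} {x : ℝ × ℝ}
    (h : DifferentiableAt ℝ (fderiv ℝ ζ) x) (u v : ℝ × ℝ) :
    fderiv ℝ (fun y => fderiv ℝ ζ y v) x u = fderiv ℝ (fderiv ℝ ζ) x u v := by
  have h2 := h.hasFDerivAt.clm_apply (hasFDerivAt_const v x)
  rw [h2.fderiv]
  simp


open Set Metric MeasureTheory intervalIntegral ContinuousLinearMap Interval in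
theorem poincare_convex {V : Set (ℝ × ℝ)} (hVo : IsOpen V) (hVc : Convex ℝ V)
    {c : ℝ × ℝ} (hc : c ∈ V)
    {f : (ℝ × ℝ) → (ℝ × ℝ) →L[ℝ] ℝ} (hf : ContDiffOn ℝ (⊤ : ℕ∞) f V)
    (hsymm : ∀ x ∈ V, ∀ u v, fderiv ℝ f x u v = fderiv ℝ f x v u) :
    ∃ ζ : ℝ × ℝ → ℝ, ContDiffOn ℝ (⊤ : ℕ∞) ζ V ∧ ∀ x ∈ V, HasFDerivAt ζ (f x) x := by
  have hone : (1 : WithTop ℕ∞) ≤ ((⊤ : ℕ∞) : WithTop ℕ∞) := by exact_mod_cast le_top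
  have hfc : ContinuousOn f V := hf.continuousOn
  have hfd : ContinuousOn (fderiv ℝ f) V :=
    ((contDiffOn_infty_iff_fderiv_of_isOpen hVo).1 hf).2.continuousOn
  have hdiffat : ∀ z ∈ V, HasFDerivAt f (fderiv ℝ f z) z := fun z hz =>
    ((hf.contDiffAt (hVo.mem_nhds hz)).differentiableAt (by simp)).hasFDerivAt
  set γ : (ℝ × ℝ) → ℝ → ℝ × ℝ := fun y t => c + t • (y - c) with hγ
  have hγcont : ∀ y, Continuous (fun t => γ y t) := by
    intro y; simp only [hγ]; fun_prop
  set ζ : ℝ × ℝ → ℝ := fun y => ∫ t in (0:ℝ)..1, f (γ y t) (y - c) with hζdef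
  have key : ∀ x ∈ V, HasFDerivAt ζ (f x) x := by
    intro x hx
    set K₀ : Set (ℝ × ℝ) := (fun t : ℝ => γ x t) '' Icc 0 1 with hK₀
    have hK₀V : K₀ ⊆ V := by
      rintro - ⟨t, ⟨ht0, ht1⟩, rfl⟩
      have h := hVc hc hx (a := 1 - t) (b := t) (by linarith) ht0 (by ring)
      convert h using 1
      simp only [hγ, smul_sub]
      module
    have hK₀cpt : IsCompact K₀ := isCompact_Icc.image (hγcont x)
    obtain ⟨δ, δpos, hδ⟩ := hK₀cpt.exists_cthickening_subset_open hVo hK₀V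
    set K : Set (ℝ × ℝ) := cthickening δ K₀ with hK
    have hKV : K ⊆ V := hδ
    have hKcpt : IsCompact K := hK₀cpt.cthickening
    have hmemK : ∀ y ∈ closedBall x δ, ∀ t ∈ Icc (0:ℝ) 1, γ y t ∈ K := by
      intro y hy t ht
      refine mem_cthickening_of_dist_le (γ y t) (γ x t) δ K₀ ⟨t, ht, rfl⟩ ?_
      have hdiff : γ y t - γ x t = t • (y - x) := by
        simp only [hγ, smul_sub]; module
      rw [dist_eq_norm, hdiff, norm_smul]
      calc ‖t‖ * ‖y - x‖ ≤ 1 * δ := by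
            apply mul_le_mul
            · rw [Real.norm_eq_abs, abs_le]; exact ⟨by linarith [ht.1], ht.2⟩
            · rw [← dist_eq_norm]; exact hy
            · positivity
            · norm_num
        _ = δ := one_mul δ
    have hmemV : ∀ y ∈ closedBall x δ, ∀ t ∈ Icc (0:ℝ) 1, γ y t ∈ V :=
      fun y hy t ht => hKV (hmemK y hy t ht)
    obtain ⟨M₁, hM₁⟩ := hKcpt.exists_bound_of_continuousOn (hfc.mono hKV)
    obtain ⟨M₂, hM₂⟩ := hKcpt.exists_bound_of_continuousOn (E := (ℝ × ℝ) →L[ℝ] (ℝ × ℝ) →L[ℝ] ℝ) (hfd.mono hKV)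
    set F' : (ℝ × ℝ) → ℝ → ((ℝ × ℝ) →L[ℝ] ℝ) :=
      fun y t => f (γ y t) + t • ((fderiv ℝ f (γ y t)).flip (y - c)) with hF'
    have h_diff : ∀ t ∈ Icc (0:ℝ) 1, ∀ y ∈ ball x δ,
        HasFDerivAt (fun y => f (γ y t) (y - c)) (F' y t) y := by
      intro t ht y hy
      have hyV : γ y t ∈ V := hmemV y (ball_subset_closedBall hy) t ht
      have hγd : HasFDerivAt (fun y => γ y t) (t • ContinuousLinearMap.id ℝ (ℝ × ℝ)) y := by
        have h0 : HasFDerivAt (fun y : ℝ × ℝ => t • (y - c))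
            (t • ContinuousLinearMap.id ℝ (ℝ × ℝ)) y :=
          ((hasFDerivAt_id y).sub_const c).const_smul t
        exact h0.const_add c
      have hcomp : HasFDerivAt (fun y => f (γ y t))
          ((fderiv ℝ f (γ y t)).comp (t • ContinuousLinearMap.id ℝ (ℝ × ℝ))) y :=
        (hdiffat _ hyV).comp y hγd
      have hu : HasFDerivAt (fun y : ℝ × ℝ => y - c) (ContinuousLinearMap.id ℝ (ℝ × ℝ)) y :=
        (hasFDerivAt_id y).sub_const c
      refine (hcomp.clm_apply hu).congr_fderiv ?_
      apply ContinuousLinearMap.ext; intro v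
      simp [hF', mul_comm]
    have hcont' : ContinuousOn (fun t => F' x t) (Icc (0:ℝ) 1) := by
      have hmaps : ∀ t ∈ Icc (0:ℝ) 1, γ x t ∈ V :=
        fun t ht => hmemV x (mem_closedBall_self δpos.le) t ht
      have p1 : ContinuousOn (fun t => f (γ x t)) (Icc (0:ℝ) 1) :=
        hfc.comp (hγcont x).continuousOn hmaps
      have p2 : ContinuousOn (fun t => (fderiv ℝ f (γ x t)).flip) (Icc (0:ℝ) 1) :=
        (ContinuousLinearMap.flipₗᵢ ℝ (ℝ × ℝ) (ℝ × ℝ) ℝ).continuous.comp_continuousOn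
          (hfd.comp (hγcont x).continuousOn hmaps)
      exact p1.add ((continuous_id.continuousOn).smul (p2.clm_apply continuousOn_const))
    have hIoc : Ι (0:ℝ) 1 = Ioc (0:ℝ) 1 := uIoc_of_le zero_le_one
    have hIcc : uIcc (0:ℝ) 1 = Icc (0:ℝ) 1 := uIcc_of_le zero_le_one
    have hFmeas : ∀ᶠ y in nhds x, AEStronglyMeasurable (fun t => f (γ y t) (y - c))
        (volume.restrict (Ι (0:ℝ) 1)) := by
      filter_upwards [closedBall_mem_nhds x δpos] with y hy
      have hcont : ContinuousOn (fun t => f (γ y t) (y - c)) (Icc (0:ℝ) 1) :=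
        (hfc.comp (hγcont y).continuousOn (fun t ht => hmemV y hy t ht)).clm_apply
          continuousOn_const
      exact (hcont.mono (by rw [hIoc]; exact Ioc_subset_Icc_self)).aestronglyMeasurable
        measurableSet_uIoc
    have hF_int : IntervalIntegrable (fun t => f (γ x t) (x - c)) volume 0 1 := by
      apply ContinuousOn.intervalIntegrable
      rw [hIcc]
      exact (hfc.comp (hγcont x).continuousOn
        (fun t ht => hmemV x (mem_closedBall_self δpos.le) t ht)).clm_apply continuousOn_const
    have hF'meas : AEStronglyMeasurable (F' x) (volume.restrict (Ι (0:ℝ) 1)) :=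
      (hcont'.mono (by rw [hIoc]; exact Ioc_subset_Icc_self)).aestronglyMeasurable
        measurableSet_uIoc
    have h_bound : ∀ᵐ t ∂(volume : Measure ℝ), t ∈ Ι (0:ℝ) 1 → ∀ y ∈ ball x δ,
        ‖F' y t‖ ≤ |M₁| + |M₂| * (‖x - c‖ + δ) := by
      refine Filter.Eventually.of_forall (fun t ht y hy => ?_)
      rw [hIoc] at ht
      have ht' : t ∈ Icc (0:ℝ) 1 := Ioc_subset_Icc_self ht
      have hyK : γ y t ∈ K := hmemK y (ball_subset_closedBall hy) t ht'
      have h1 : ‖f (γ y t)‖ ≤ |M₁| := (hM₁ _ hyK).trans (le_abs_self M₁)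
      have h2 : ‖fderiv ℝ f (γ y t)‖ ≤ |M₂| := (hM₂ _ hyK).trans (le_abs_self M₂)
      have h3 : ‖y - c‖ ≤ ‖x - c‖ + δ := by
        have := dist_triangle y x c
        rw [dist_eq_norm, dist_eq_norm, dist_eq_norm] at this
        have hyx : ‖y - x‖ ≤ δ := le_of_lt (by rw [← dist_eq_norm]; exact hy)
        linarith
      have h4 : ‖t • (fderiv ℝ f (γ y t)).flip (y - c)‖ ≤ |M₂| * (‖x - c‖ + δ) := by
        rw [norm_smul]
        have h5 : ‖(fderiv ℝ f (γ y t)).flip (y - c)‖ ≤ ‖fderiv ℝ f (γ y t)‖ * ‖y - c‖ := by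
          calc ‖(fderiv ℝ f (γ y t)).flip (y - c)‖
              ≤ ‖(fderiv ℝ f (γ y t)).flip‖ * ‖y - c‖ := le_opNorm _ _
            _ = ‖fderiv ℝ f (γ y t)‖ * ‖y - c‖ := by rw [opNorm_flip]
        have h6 : ‖t‖ ≤ 1 := by
          rw [Real.norm_eq_abs, abs_le]; exact ⟨by linarith [ht'.1], ht'.2⟩
        calc ‖t‖ * ‖(fderiv ℝ f (γ y t)).flip (y - c)‖
            ≤ 1 * (‖fderiv ℝ f (γ y t)‖ * ‖y - c‖) :=
              mul_le_mul h6 (h5.trans (le_refl _)) (norm_nonneg _) one_pos.le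
          _ = ‖fderiv ℝ f (γ y t)‖ * ‖y - c‖ := one_mul _
          _ ≤ |M₂| * (‖x - c‖ + δ) :=
              mul_le_mul h2 h3 (norm_nonneg _) (abs_nonneg _)
      exact (norm_add_le _ _).trans (by linarith)
    have h_diff' : ∀ᵐ t ∂(volume : Measure ℝ), t ∈ Ι (0:ℝ) 1 → ∀ y ∈ ball x δ,
        HasFDerivAt (fun y => f (γ y t) (y - c)) (F' y t) y := by
      refine Filter.Eventually.of_forall (fun t ht y hy => ?_)
      rw [hIoc] at ht
      exact h_diff t (Ioc_subset_Icc_self ht) y hy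
    have hmain := hasFDerivAt_integral_of_dominated_of_fderiv_le (μ := volume)
      (F := fun y t => f (γ y t) (y - c)) (F' := F') (x₀ := x)
      (bound := fun _ => |M₁| + |M₂| * (‖x - c‖ + δ)) (ball_mem_nhds x δpos) hFmeas hF_int hF'meas
      h_bound intervalIntegrable_const h_diff'
    -- FTC: the integral of F' x is f x
    have hg : ∀ t ∈ uIcc (0:ℝ) 1, HasDerivAt (fun s => s • f (γ x s)) (F' x t) t := by
      intro t ht
      rw [hIcc] at ht
      have hγV : γ x t ∈ V := hmemV x (mem_closedBall_self δpos.le) t ht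
      have hγd : HasDerivAt (fun s : ℝ => γ x s) (x - c) t := by
        have h0 : HasDerivAt (fun s : ℝ => s • (x - c)) (x - c) t := by
          simpa using (hasDerivAt_id t).smul_const (x - c)
        exact h0.const_add c
      have hfγ : HasDerivAt (fun s => f (γ x s)) (fderiv ℝ f (γ x t) (x - c)) t :=
        (hdiffat _ hγV).comp_hasDerivAt t hγd
      have h := (hasDerivAt_id t).smul hfγ
      refine h.congr_deriv (Eq.symm ?_)
      apply ContinuousLinearMap.ext; intro v
      simp only [hF', ContinuousLinearMap.add_apply, ContinuousLinearMap.smul_apply,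
        ContinuousLinearMap.flip_apply, one_smul, smul_eq_mul, id_eq]
      rw [hsymm _ hγV v (x - c)]
      ring
    have hint : IntervalIntegrable (F' x) volume 0 1 := by
      apply ContinuousOn.intervalIntegrable
      rw [hIcc]; exact hcont'
    have hFTC := integral_eq_sub_of_hasDerivAt hg hint
    have hval : (∫ t in (0:ℝ)..1, F' x t) = f x := by
      rw [hFTC]
      simp [hγ]
    rw [hval] at hmain
    exact hmain
  refine ⟨ζ, ?_, key⟩
  rw [contDiffOn_infty_iff_fderiv_of_isOpen hVo]
  exact ⟨fun z hz => (key z hz).differentiableAt.differentiableWithinAt,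
    hf.congr (fun z hz => (key z hz).fderiv)⟩


/-- The staticity conditions (RW1), (RW2), (RW3) hold on `I × V` (with `V`
open and convex, `G > 0`) if and only if `H_A = G·∂_A ζ` for a smooth
function `ζ` of the `x`-variables alone. -/
theorem staticity_iff_potential (I : Set ℝ) (hIopen : IsOpen I)
    (hIconn : I.OrdConnected)
    (V : Set (ℝ × ℝ)) (hVopen : IsOpen V) (hVconv : Convex ℝ V)
    (G H₁ H₂ : ℝ × (ℝ × ℝ) → ℝ)
    (hG : ContDiffOn ℝ (⊤ : ℕ∞) G (I ×ˢ V))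
    (hH₁ : ContDiffOn ℝ (⊤ : ℕ∞) H₁ (I ×ˢ V))
    (hH₂ : ContDiffOn ℝ (⊤ : ℕ∞) H₂ (I ×ˢ V))
    (hGpos : ∀ p ∈ I ×ˢ V, 0 < G p) :
    (∀ p ∈ I ×ˢ V,
        (G p * fderiv ℝ H₁ p (1, 0, 0) - H₁ p * fderiv ℝ G p (1, 0, 0) = 0) ∧
        (G p * fderiv ℝ H₂ p (1, 0, 0) - H₂ p * fderiv ℝ G p (1, 0, 0) = 0) ∧
        (H₁ p * fderiv ℝ G p (0, 0, 1) - H₂ p * fderiv ℝ G p (0, 1, 0) +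
          G p * (fderiv ℝ H₂ p (0, 1, 0) - fderiv ℝ H₁ p (0, 0, 1)) = 0) ∧
        (H₁ p * fderiv ℝ H₂ p (1, 0, 0) - H₂ p * fderiv ℝ H₁ p (1, 0, 0) = 0))
      ↔
    (∃ ζ : ℝ × ℝ → ℝ, ContDiffOn ℝ (⊤ : ℕ∞) ζ V ∧
        ∀ p ∈ I ×ˢ V,
          H₁ p = G p * fderiv ℝ ζ p.2 (1, 0) ∧
          H₂ p = G p * fderiv ℝ ζ p.2 (0, 1)) := by
  constructor
  · intro hRW
    have hone : (1 : WithTop ℕ∞) ≤ ((⊤ : ℕ∞) : WithTop ℕ∞) := by exact_mod_cast le_top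
    have hIVopen : IsOpen (I ×ˢ V) := hIopen.prod hVopen
    rcases Set.eq_empty_or_nonempty I with hIe | ⟨w₀, hw₀⟩
    · exact ⟨fun _ => 0, contDiffOn_const, fun p hp => by
        rw [Set.mem_prod, hIe] at hp; exact absurd hp.1 (Set.notMem_empty _)⟩
    rcases Set.eq_empty_or_nonempty V with hVe | ⟨c, hcV⟩
    · exact ⟨fun _ => 0, contDiffOn_const, fun p hp => by
        rw [Set.mem_prod, hVe] at hp; exact absurd hp.2 (Set.notMem_empty _)⟩
    have hmemIV : ∀ x ∈ V, (w₀, x) ∈ I ×ˢ V := fun x hx => ⟨hw₀, hx⟩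
    -- slice functions
    set g : ℝ × ℝ → ℝ := fun x => G (w₀, x) with hgdef
    set h₁ : ℝ × ℝ → ℝ := fun x => H₁ (w₀, x) with hh₁def
    set h₂ : ℝ × ℝ → ℝ := fun x => H₂ (w₀, x) with hh₂def
    have hslice : ContDiff ℝ (⊤ : ℕ∞) (fun x : ℝ × ℝ => ((w₀, x) : ℝ × (ℝ × ℝ))) :=
      contDiff_const.prodMk contDiff_id
    have hgs : ContDiffOn ℝ (⊤ : ℕ∞) g V := hG.comp hslice.contDiffOn hmemIV
    have hh₁s : ContDiffOn ℝ (⊤ : ℕ∞) h₁ V := hH₁.comp hslice.contDiffOn hmemIV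
    have hh₂s : ContDiffOn ℝ (⊤ : ℕ∞) h₂ V := hH₂.comp hslice.contDiffOn hmemIV
    have hgpos : ∀ x ∈ V, 0 < g x := fun x hx => hGpos _ (hmemIV x hx)
    set F₁ : ℝ × ℝ → ℝ := fun x => h₁ x / g x with hF₁def
    set F₂ : ℝ × ℝ → ℝ := fun x => h₂ x / g x with hF₂def
    have hF₁s : ContDiffOn ℝ (⊤ : ℕ∞) F₁ V := hh₁s.div hgs (fun x hx => (hgpos x hx).ne')
    have hF₂s : ContDiffOn ℝ (⊤ : ℕ∞) F₂ V := hh₂s.div hgs (fun x hx => (hgpos x hx).ne')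
    set f : (ℝ × ℝ) → (ℝ × ℝ) →L[ℝ] ℝ := fun x =>
      F₁ x • ContinuousLinearMap.fst ℝ ℝ ℝ + F₂ x • ContinuousLinearMap.snd ℝ ℝ ℝ with hfdef
    have hfs : ContDiffOn ℝ (⊤ : ℕ∞) f V :=
      (hF₁s.smul contDiffOn_const).add (hF₂s.smul contDiffOn_const)
    -- fderiv of f
    have hdiffat : ∀ {φ : ℝ × ℝ → ℝ}, ContDiffOn ℝ (⊤ : ℕ∞) φ V → ∀ x ∈ V,
        DifferentiableAt ℝ φ x := fun {φ} hφ x hx =>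
      (hφ.contDiffAt (hVopen.mem_nhds hx)).differentiableAt (by simp)
    have hDf : ∀ x ∈ V, fderiv ℝ f x =
        (fderiv ℝ F₁ x).smulRight (ContinuousLinearMap.fst ℝ ℝ ℝ) +
        (fderiv ℝ F₂ x).smulRight (ContinuousLinearMap.snd ℝ ℝ ℝ) := by
      intro x hx
      exact (((hdiffat hF₁s x hx).hasFDerivAt.smul_const _).add
        ((hdiffat hF₂s x hx).hasFDerivAt.smul_const _)).fderiv
    -- the key cross-derivative identity from RW2
    have hkey : ∀ x ∈ V, fderiv ℝ F₁ x (0, 1) = fderiv ℝ F₂ x (1, 0) := by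
      intro x hx
      have hg0 : g x ≠ 0 := (hgpos x hx).ne'
      have hGd : DifferentiableAt ℝ G (w₀, x) :=
        (hG.contDiffAt (hIVopen.mem_nhds (hmemIV x hx))).differentiableAt (by simp)
      have hH₁d : DifferentiableAt ℝ H₁ (w₀, x) :=
        (hH₁.contDiffAt (hIVopen.mem_nhds (hmemIV x hx))).differentiableAt (by simp)
      have hH₂d : DifferentiableAt ℝ H₂ (w₀, x) :=
        (hH₂.contDiffAt (hIVopen.mem_nhds (hmemIV x hx))).differentiableAt (by simp)
      -- product identities: F_A * g = h_A
      have hgF₁ : g x * F₁ x = h₁ x := by simp only [hF₁def]; field_simp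
      have hgF₂ : g x * F₂ x = h₂ x := by simp only [hF₂def]; field_simp
      have hprod : ∀ (F h : ℝ × ℝ → ℝ), ContDiffOn ℝ (⊤ : ℕ∞) F V →
          (∀ y ∈ V, F y * g y = h y) → ∀ e : ℝ × ℝ,
          F₁ x = F₁ x → -- dummy
          fderiv ℝ h x e = F x * fderiv ℝ g x e + g x * fderiv ℝ F x e := by
        intro F h hFs hFh e _
        have hev : (fun y => F y * g y) =ᶠ[nhds x] h :=
          Filter.eventuallyEq_of_mem (hVopen.mem_nhds hx) hFh
        rw [← hev.fderiv_eq]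
        rw [HasFDerivAt.fderiv (f := fun y => F y * g y) ((hdiffat hFs x hx).hasFDerivAt.mul (hdiffat hgs x hx).hasFDerivAt)]
        simp only [ContinuousLinearMap.add_apply, ContinuousLinearMap.smul_apply,
          smul_eq_mul]
      have e1 := hprod F₁ h₁ hF₁s (fun y hy => div_mul_cancel₀ (h₁ y) (hgpos y hy).ne') (0, 1) rfl
      have e2 := hprod F₂ h₂ hF₂s (fun y hy => div_mul_cancel₀ (h₂ y) (hgpos y hy).ne') (1, 0) rfl
      -- translate slice derivatives
      have hdg : ∀ e : ℝ × ℝ, fderiv ℝ g x e = fderiv ℝ G (w₀, x) (0, e) :=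
        fun e => slice_fderiv hGd e
      have hdh₁ : ∀ e : ℝ × ℝ, fderiv ℝ h₁ x e = fderiv ℝ H₁ (w₀, x) (0, e) :=
        fun e => slice_fderiv hH₁d e
      have hdh₂ : ∀ e : ℝ × ℝ, fderiv ℝ h₂ x e = fderiv ℝ H₂ (w₀, x) (0, e) :=
        fun e => slice_fderiv hH₂d e
      obtain ⟨-, -, hRW2, -⟩ := hRW (w₀, x) (hmemIV x hx)
      rw [hdh₁, hdg] at e1
      rw [hdh₂, hdg] at e2
      -- multiply through by g and cancel
      have hmul : g x * (g x * fderiv ℝ F₁ x (0, 1)) = g x * (g x * fderiv ℝ F₂ x (1, 0)) := by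
        have m1 : g x * fderiv ℝ H₁ (w₀, x) (0, (0:ℝ), (1:ℝ)) =
            h₁ x * fderiv ℝ G (w₀, x) (0, (0:ℝ), (1:ℝ)) + g x * (g x * fderiv ℝ F₁ x (0, 1)) := by
          have := congrArg (fun z => g x * z) e1
          try simp only at this
          rw [this]
          have : g x * (F₁ x * fderiv ℝ G (w₀, x) (0, (0:ℝ), (1:ℝ))) =
              h₁ x * fderiv ℝ G (w₀, x) (0, (0:ℝ), (1:ℝ)) := by
            rw [← hgF₁]; ring
          linarith [this]
        have m2 : g x * fderiv ℝ H₂ (w₀, x) (0, (1:ℝ), (0:ℝ)) =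
            h₂ x * fderiv ℝ G (w₀, x) (0, (1:ℝ), (0:ℝ)) + g x * (g x * fderiv ℝ F₂ x (1, 0)) := by
          have := congrArg (fun z => g x * z) e2
          try simp only at this
          rw [this]
          have : g x * (F₂ x * fderiv ℝ G (w₀, x) (0, (1:ℝ), (0:ℝ))) =
              h₂ x * fderiv ℝ G (w₀, x) (0, (1:ℝ), (0:ℝ)) := by
            rw [← hgF₂]; ring
          linarith [this]
        have hRW2' : h₁ x * fderiv ℝ G (w₀, x) (0, 0, 1) - h₂ x * fderiv ℝ G (w₀, x) (0, 1, 0) +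
            g x * (fderiv ℝ H₂ (w₀, x) (0, 1, 0) - fderiv ℝ H₁ (w₀, x) (0, 0, 1)) = 0 := hRW2
        linarith [m1, m2, hRW2']
      exact mul_left_cancel₀ hg0 (mul_left_cancel₀ hg0 hmul)
    -- symmetry of fderiv f
    have hsymm : ∀ x ∈ V, ∀ u v : ℝ × ℝ, fderiv ℝ f x u v = fderiv ℝ f x v u := by
      intro x hx u v
      have expand : ∀ (L : (ℝ × ℝ) →L[ℝ] ℝ) (z : ℝ × ℝ),
          L z = z.1 * L (1, 0) + z.2 * L (0, 1) := by
        intro L z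
        have hz : (z : ℝ × ℝ) = z.1 • ((1:ℝ), (0:ℝ)) + z.2 • ((0:ℝ), (1:ℝ)) := by
          ext <;> simp
        conv_lhs => rw [hz]
        rw [map_add, map_smul, map_smul]
        simp [smul_eq_mul]
      rw [hDf x hx]
      simp only [ContinuousLinearMap.add_apply, ContinuousLinearMap.smulRight_apply,
        ContinuousLinearMap.smul_apply, ContinuousLinearMap.coe_fst',
        ContinuousLinearMap.coe_snd', smul_eq_mul]
      rw [expand (fderiv ℝ F₁ x) u, expand (fderiv ℝ F₂ x) u, expand (fderiv ℝ F₁ x) v,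
        expand (fderiv ℝ F₂ x) v, hkey x hx]
      ring
    obtain ⟨ζ, hζs, hζd⟩ := poincare_convex hVopen hVconv hcV hfs hsymm
    refine ⟨ζ, hζs, ?_⟩
    rintro ⟨w, x⟩ ⟨hw, hx⟩
    have hfζ : fderiv ℝ ζ x = f x := (hζd x hx).fderiv
    have hf10 : f x (1, 0) = F₁ x := by simp [hfdef]
    have hf01 : f x (0, 1) = F₂ x := by simp [hfdef]
    -- w-constancy of H_A / G
    have hconst : ∀ (H : ℝ × (ℝ × ℝ) → ℝ), ContDiffOn ℝ (⊤ : ℕ∞) H (I ×ˢ V) →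
        (∀ p ∈ I ×ˢ V, G p * fderiv ℝ H p (1, 0, 0) - H p * fderiv ℝ G p (1, 0, 0) = 0) →
        H (w, x) / G (w, x) = H (w₀, x) / G (w₀, x) := by
      intro H hHs hrw1
      set q : ℝ → ℝ := fun s => H (s, x) / G (s, x) with hq
      have hqd : ∀ s ∈ I, HasDerivAt q 0 s := by
        intro s hs
        have hmem : ((s, x) : ℝ × (ℝ × ℝ)) ∈ I ×ˢ V := ⟨hs, hx⟩
        have hHd : DifferentiableAt ℝ H (s, x) :=
          (hHs.contDiffAt (hIVopen.mem_nhds hmem)).differentiableAt (by simp)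
        have hGd : DifferentiableAt ℝ G (s, x) :=
          (hG.contDiffAt (hIVopen.mem_nhds hmem)).differentiableAt (by simp)
        have hd := (line_hasDerivAt hHd).div (line_hasDerivAt hGd) (hGpos _ hmem).ne'
        refine hd.congr_deriv (Eq.symm ?_)
        have hr := hrw1 (s, x) hmem
        rw [show ((1:ℝ), (0:ℝ), (0:ℝ)) = ((1:ℝ), (0 : ℝ × ℝ)) from rfl] at hr
        rw [eq_comm, div_eq_zero_iff]
        left; linarith
      have hIconv : Convex ℝ I := hIconn.convex
      have hdiff : DifferentiableOn ℝ q I :=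
        fun s hs => ((hqd s hs).differentiableAt).differentiableWithinAt
      have hzero : ∀ s ∈ I, fderivWithin ℝ q I s = 0 := by
        intro s hs
        rw [fderivWithin_of_isOpen hIopen hs, (hqd s hs).hasFDerivAt.fderiv]
        ext r
        simp
      exact hIconv.is_const_of_fderivWithin_eq_zero hdiff hzero hw hw₀
    have hG1 : (0:ℝ) < G (w, x) := hGpos _ ⟨hw, hx⟩
    have hG0 : (0:ℝ) < G (w₀, x) := hGpos _ (hmemIV x hx)
    constructor
    · rw [hfζ, hf10]
      have hc := hconst H₁ hH₁ (fun p hp => (hRW p hp).1)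
      rw [hF₁def]
      simp only [hh₁def, hgdef]
      rw [← hc]
      field_simp
    · rw [hfζ, hf01]
      have hc := hconst H₂ hH₂ (fun p hp => (hRW p hp).2.1)
      rw [hF₂def]
      simp only [hh₂def, hgdef]
      rw [← hc]
      field_simp

  · intro hpot
    obtain ⟨ζ, hζs, hζeq⟩ := hpot
    have hone : (1 : WithTop ℕ∞) ≤ ((⊤ : ℕ∞) : WithTop ℕ∞) := by
      exact_mod_cast (le_top : (1 : ℕ∞) ≤ ⊤)
    have htwo : (2 : WithTop ℕ∞) ≤ ((⊤ : ℕ∞) : WithTop ℕ∞) := by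
      have h := WithTop.coe_le_coe.2 (le_top : (2 : ℕ∞) ≤ ⊤)
      simpa using h
    have hIVopen : IsOpen (I ×ˢ V) := hIopen.prod hVopen
    rintro ⟨w, x⟩ ⟨hw, hx⟩
    have hp : ((w, x) : ℝ × (ℝ × ℝ)) ∈ I ×ˢ V := ⟨hw, hx⟩
    set A : ℝ × (ℝ × ℝ) → ℝ := fun q => fderiv ℝ ζ q.2 (1, 0) with hA
    set B : ℝ × (ℝ × ℝ) → ℝ := fun q => fderiv ℝ ζ q.2 (0, 1) with hB
    have hdζ : ContDiffOn ℝ (⊤ : ℕ∞) (fderiv ℝ ζ) V :=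
      ((contDiffOn_infty_iff_fderiv_of_isOpen hVopen).1 hζs).2
    have hdζd : DifferentiableAt ℝ (fderiv ℝ ζ) x :=
      (hdζ.contDiffAt (hVopen.mem_nhds hx)).differentiableAt (by simp)
    have hA1d : DifferentiableAt ℝ (fun y => fderiv ℝ ζ y ((1:ℝ), (0:ℝ))) x :=
      hdζd.clm_apply (differentiableAt_const _)
    have hB1d : DifferentiableAt ℝ (fun y => fderiv ℝ ζ y ((0:ℝ), (1:ℝ))) x :=
      hdζd.clm_apply (differentiableAt_const _)
    have hAd : HasFDerivAt A
        ((fderiv ℝ (fun y => fderiv ℝ ζ y ((1:ℝ), (0:ℝ))) x).comp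
          (ContinuousLinearMap.snd ℝ ℝ (ℝ × ℝ))) (w, x) :=
      HasFDerivAt.comp (g := fun y => fderiv ℝ ζ y ((1:ℝ), (0:ℝ))) (f := Prod.snd) (w, x) hA1d.hasFDerivAt hasFDerivAt_snd
    have hBd : HasFDerivAt B
        ((fderiv ℝ (fun y => fderiv ℝ ζ y ((0:ℝ), (1:ℝ))) x).comp
          (ContinuousLinearMap.snd ℝ ℝ (ℝ × ℝ))) (w, x) :=
      HasFDerivAt.comp (g := fun y => fderiv ℝ ζ y ((0:ℝ), (1:ℝ))) (f := Prod.snd) (w, x) hB1d.hasFDerivAt hasFDerivAt_snd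
    have hGd : DifferentiableAt ℝ G (w, x) :=
      (hG.contDiffAt (hIVopen.mem_nhds hp)).differentiableAt (by simp)
    have hev₁ : H₁ =ᶠ[nhds (w, x)] fun q => G q * A q :=
      Filter.eventuallyEq_of_mem (hIVopen.mem_nhds hp) (fun q hq => (hζeq q hq).1)
    have hev₂ : H₂ =ᶠ[nhds (w, x)] fun q => G q * B q :=
      Filter.eventuallyEq_of_mem (hIVopen.mem_nhds hp) (fun q hq => (hζeq q hq).2)
    have hfd₁ : fderiv ℝ H₁ (w, x) = G (w, x) •
        ((fderiv ℝ (fun y => fderiv ℝ ζ y ((1:ℝ), (0:ℝ))) x).comp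
          (ContinuousLinearMap.snd ℝ ℝ (ℝ × ℝ))) + A (w, x) • fderiv ℝ G (w, x) := by
      rw [hev₁.fderiv_eq, HasFDerivAt.fderiv (f := fun q => G q * A q) (hGd.hasFDerivAt.mul hAd)]
    have hfd₂ : fderiv ℝ H₂ (w, x) = G (w, x) •
        ((fderiv ℝ (fun y => fderiv ℝ ζ y ((0:ℝ), (1:ℝ))) x).comp
          (ContinuousLinearMap.snd ℝ ℝ (ℝ × ℝ))) + B (w, x) • fderiv ℝ G (w, x) := by
      rw [hev₂.fderiv_eq, HasFDerivAt.fderiv (f := fun q => G q * B q) (hGd.hasFDerivAt.mul hBd)]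
    have hzero : ∀ (L : (ℝ × ℝ) →L[ℝ] ℝ), L ((0:ℝ), (0:ℝ)) = 0 := fun L => by
      rw [show ((0:ℝ), (0:ℝ)) = (0 : ℝ × ℝ) from rfl, map_zero]
    have hsymm := (hζs.contDiffAt (hVopen.mem_nhds hx)).isSymmSndFDerivAt (by rw [minSmoothness_of_isRCLikeNormedField]; exact htwo)
    have hcross : fderiv ℝ (fun y => fderiv ℝ ζ y ((1:ℝ), (0:ℝ))) x ((0:ℝ), (1:ℝ)) =
        fderiv ℝ (fun y => fderiv ℝ ζ y ((0:ℝ), (1:ℝ))) x ((1:ℝ), (0:ℝ)) := by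
      rw [fderiv_eval_comm hdζd, fderiv_eval_comm hdζd, hsymm.eq]
    have hH₁p : H₁ (w, x) = G (w, x) * A (w, x) := (hζeq _ hp).1
    have hH₂p : H₂ (w, x) = G (w, x) * B (w, x) := (hζeq _ hp).2
    refine ⟨?_, ?_, ?_, ?_⟩
    · rw [hfd₁, hH₁p]
      simp only [ContinuousLinearMap.add_apply, ContinuousLinearMap.smul_apply,
        ContinuousLinearMap.coe_comp', Function.comp_apply, ContinuousLinearMap.coe_snd',
        smul_eq_mul]
      rw [hzero]
      ring
    · rw [hfd₂, hH₂p]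
      simp only [ContinuousLinearMap.add_apply, ContinuousLinearMap.smul_apply,
        ContinuousLinearMap.coe_comp', Function.comp_apply, ContinuousLinearMap.coe_snd',
        smul_eq_mul]
      rw [hzero]
      ring
    · rw [hfd₁, hfd₂, hH₁p, hH₂p]
      simp only [ContinuousLinearMap.add_apply, ContinuousLinearMap.smul_apply,
        ContinuousLinearMap.coe_comp', Function.comp_apply, ContinuousLinearMap.coe_snd',
        smul_eq_mul]
      rw [hcross]
      ring
    · rw [hfd₁, hfd₂, hH₁p, hH₂p]
      simp only [ContinuousLinearMap.add_apply, ContinuousLinearMap.smul_apply,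
        ContinuousLinearMap.coe_comp', Function.comp_apply, ContinuousLinearMap.coe_snd',
        smul_eq_mul]
      rw [hzero, hzero]
      ring
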